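/- arXiv:math/0010159 — 3 statements merged into one kernel-verified Lean document; each statement's English description precedes it below -/
import Mathlib

section
/- Let w ∈ W̃_n, let a < b be integers with w(a) > w(b), and let k be an integer such that L(s_k ∘ w) = L(w) + 1. Then (s_k ∘ w)(a) > (s_k ∘ w)(b). -/
/-- A bijection of `ℤ` satisfying the periodicity `σ(i + n) = σ(i) + n`. -/
def IsAff (n : ℕ) (σ : ℤ → ℤ) : Prop :=
  Function.Bijective σ ∧ ∀ i : ℤ, σ (i + (n : ℤ)) = σ i + (n : ℤ)

/-- The Iwahori–Matsumoto length `L(w) = Σ_{1 ≤ i < j ≤ n} |⌊(w(j) - w(i))/n⌋|`. -/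
noncomputable def affLen (n : ℕ) (w : ℤ → ℤ) : ℕ :=
  ∑ p ∈ ((Finset.Icc (1 : ℤ) (n : ℤ)) ×ˢ (Finset.Icc (1 : ℤ) (n : ℤ))).filter
      (fun p => p.1 < p.2),
    (Int.fdiv (w p.2 - w p.1) (n : ℤ)).natAbs

/-- The simple reflection `s_k` of the affine Weyl group of type `Ã_{n-1}`. -/
def sRef (n : ℕ) (k j : ℤ) : ℤ :=
  if j % (n : ℤ) = k % (n : ℤ) then j + 1
  else if j % (n : ℤ) = (k + 1) % (n : ℤ) then j - 1
  else j

lemma emod_eq_iff_dvd {N x k : ℤ} : x % N = k % N ↔ N ∣ (x - k) := by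
  rw [Int.emod_eq_emod_iff_emod_sub_eq_zero, ← Int.dvd_iff_emod_eq_zero]

lemma k_ne_k1 {N k : ℤ} (hN : 2 ≤ N) : k % N ≠ (k+1) % N := by
  intro h
  have h2 : N ∣ (k - (k+1)) := emod_eq_iff_dvd.mp h
  have : N ∣ 1 := by simpa using (dvd_neg.mpr h2)
  have := Int.le_of_dvd one_pos this
  omega

lemma ediv_eq_of {N q r : ℤ} (h0 : 0 ≤ r) (h1 : r < N) : (N*q + r)/N = q := by
  rw [add_comm, Int.add_mul_ediv_left r q (by omega : N ≠ 0),
    Int.ediv_eq_zero_of_lt h0 h1, zero_add]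

lemma ediv_add_one {N d : ℤ} (hN : 0 < N) (h : ¬ (N ∣ d + 1)) : (d+1)/N = d/N := by
  have hd := Int.mul_ediv_add_emod d N
  have hr0 : 0 ≤ d % N := Int.emod_nonneg d (by omega)
  have hr1 : d % N < N := Int.emod_lt_of_pos d hN
  rcases eq_or_lt_of_le (by omega : d % N + 1 ≤ N) with he | hlt
  · exact absurd ⟨d/N + 1, by rw [mul_add, mul_one]; omega⟩ h
  · have : d + 1 = N * (d/N) + (d % N + 1) := by omega
    rw [this, ediv_eq_of (by omega) hlt]

lemma ediv_sub_one {N d : ℤ} (hN : 0 < N) (h : ¬ (N ∣ d)) : (d-1)/N = d/N := by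
  have hd := Int.mul_ediv_add_emod d N
  have hr0 : 0 ≤ d % N := Int.emod_nonneg d (by omega)
  have hr1 : d % N < N := Int.emod_lt_of_pos d hN
  have hne : d % N ≠ 0 := fun he => h ⟨d/N, by omega⟩
  have : d - 1 = N * (d/N) + (d % N - 1) := by omega
  rw [this, ediv_eq_of (by omega) (by omega)]

lemma sRef_of_k {n : ℕ} {k x : ℤ} (h : x % (n:ℤ) = k % (n:ℤ)) : sRef n k x = x + 1 := by
  simp [sRef, h]

lemma sRef_of_k1 {n : ℕ} (hn : 2 ≤ n) {k x : ℤ} (h : x % (n:ℤ) = (k+1) % (n:ℤ)) :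
    sRef n k x = x - 1 := by
  have hne : x % (n:ℤ) ≠ k % (n:ℤ) := by
    rw [h]; exact fun hh => k_ne_k1 (by exact_mod_cast hn) hh.symm
  unfold sRef
  rw [if_neg hne, if_pos h]

lemma sRef_other {n : ℕ} {k x : ℤ} (h1 : x % (n:ℤ) ≠ k % (n:ℤ))
    (h2 : x % (n:ℤ) ≠ (k+1) % (n:ℤ)) : sRef n k x = x := by
  simp [sRef, h1, h2]

lemma fdiv_sRef_sub {n : ℕ} (hn : 2 ≤ n) {k x y : ℤ}
    (h1 : ¬(x % (n:ℤ) = k % (n:ℤ) ∧ y % (n:ℤ) = (k+1) % (n:ℤ)))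
    (h2 : ¬(x % (n:ℤ) = (k+1) % (n:ℤ) ∧ y % (n:ℤ) = k % (n:ℤ))) :
    Int.fdiv (sRef n k y - sRef n k x) (n:ℤ) = Int.fdiv (y - x) (n:ℤ) := by
  have hN : (2:ℤ) ≤ (n:ℤ) := by exact_mod_cast hn
  have hN0 : (0:ℤ) < (n:ℤ) := by omega
  rw [Int.fdiv_eq_ediv_of_nonneg _ (by omega), Int.fdiv_eq_ediv_of_nonneg _ (by omega)]
  by_cases hx1 : x % (n:ℤ) = k % (n:ℤ)
  · by_cases hy1 : y % (n:ℤ) = k % (n:ℤ)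
    · rw [sRef_of_k hx1, sRef_of_k hy1]; ring_nf
    · have hy2 : y % (n:ℤ) ≠ (k+1) % (n:ℤ) := fun hy2 => h1 ⟨hx1, hy2⟩
      rw [sRef_of_k hx1, sRef_other hy1 hy2,
        show y - (x+1) = (y - x) - 1 by ring]
      refine ediv_sub_one hN0 (fun hd => hy1 (emod_eq_iff_dvd.mpr ?_))
      rw [show y - k = (y - x) + (x - k) by ring]
      exact dvd_add hd (emod_eq_iff_dvd.mp hx1)
  · by_cases hx2 : x % (n:ℤ) = (k+1) % (n:ℤ)
    · by_cases hy1 : y % (n:ℤ) = k % (n:ℤ)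
      · exact absurd ⟨hx2, hy1⟩ h2
      · by_cases hy2 : y % (n:ℤ) = (k+1) % (n:ℤ)
        · rw [sRef_of_k1 hn hx2, sRef_of_k1 hn hy2]; ring_nf
        · rw [sRef_of_k1 hn hx2, sRef_other hy1 hy2,
            show y - (x-1) = (y - x) + 1 by ring]
          refine ediv_add_one hN0 (fun hd => hy1 (emod_eq_iff_dvd.mpr ?_))
          rw [show y - k = (y - x + 1) + (x - (k+1)) by ring]
          exact dvd_add hd (emod_eq_iff_dvd.mp hx2)
    · by_cases hy1 : y % (n:ℤ) = k % (n:ℤ)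
      · rw [sRef_of_k hy1, sRef_other hx1 hx2,
          show y + 1 - x = (y - x) + 1 by ring]
        refine ediv_add_one hN0 (fun hd => hx2 (emod_eq_iff_dvd.mpr ?_))
        rw [show x - (k+1) = -(y - x + 1) + (y - k) by ring]
        exact dvd_add (dvd_neg.mpr hd) (emod_eq_iff_dvd.mp hy1)
      · by_cases hy2 : y % (n:ℤ) = (k+1) % (n:ℤ)
        · rw [sRef_of_k1 hn hy2, sRef_other hx1 hx2,
            show y - 1 - x = (y - x) - 1 by ring]
          refine ediv_sub_one hN0 (fun hd => hx2 (emod_eq_iff_dvd.mpr ?_))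
          rw [show x - (k+1) = -(y - x) + (y - (k+1)) by ring]
          exact dvd_add (dvd_neg.mpr hd) (emod_eq_iff_dvd.mp hy2)
        · rw [sRef_other hx1 hx2, sRef_other hy1 hy2]

lemma emod_succ_eq {N x k : ℤ} (h : x % N = k % N) : (x+1) % N = (k+1) % N := by
  refine emod_eq_iff_dvd.mpr ?_
  rw [show x + 1 - (k+1) = x - k by ring]
  exact emod_eq_iff_dvd.mp h

lemma emod_pred_eq {N x k : ℤ} (h : x % N = k % N) : (x-1) % N = (k-1) % N := by
  refine emod_eq_iff_dvd.mpr ?_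
  rw [show x - 1 - (k-1) = x - k by ring]
  exact emod_eq_iff_dvd.mp h

lemma aff_per {n : ℕ} {w : ℤ → ℤ} (hw : IsAff n w) (i m : ℤ) :
    w (i + (n:ℤ)*m) = w i + (n:ℤ)*m := by
  have hnat : ∀ (i : ℤ) (j : ℕ), w (i + (n:ℤ)*j) = w i + (n:ℤ)*j := by
    intro i j
    induction j with
    | zero => simp
    | succ j ih =>
      have h2 := hw.2 (i + (n:ℤ)*j)
      rw [show i + (n:ℤ)*((j:ℕ)+1 : ℕ) = (i + (n:ℤ)*j) + (n:ℤ) by push_cast; ring,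
        h2, ih]
      push_cast; ring
  rcases le_or_gt 0 m with hm | hm
  · obtain ⟨j, rfl⟩ := Int.eq_ofNat_of_zero_le hm
    exact hnat i j
  · obtain ⟨j, hj⟩ : ∃ j : ℕ, m = -(j:ℤ) := ⟨m.natAbs, by omega⟩
    subst hj
    have h3 := hnat (i + (n:ℤ)*(-(j:ℤ))) j
    rw [show i + (n:ℤ)*(-(j:ℤ)) + (n:ℤ)*(j:ℤ) = i by ring] at h3
    simp only [mul_neg] at h3 ⊢
    omega

lemma aff_uniq {n : ℕ} {w : ℤ → ℤ} (hw : IsAff n w) {p q : ℤ}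
    (hp1 : 1 ≤ p) (hp2 : p ≤ (n:ℤ)) (hq1 : 1 ≤ q) (hq2 : q ≤ (n:ℤ))
    (h : w p % (n:ℤ) = w q % (n:ℤ)) : p = q := by
  obtain ⟨m, hm⟩ := emod_eq_iff_dvd.mp h
  have h1 : w p = w (q + (n:ℤ)*m) := by rw [aff_per hw]; omega
  have hpq : p = q + (n:ℤ)*m := hw.1.1 h1
  have hd : (n:ℤ) ∣ p - q := ⟨m, by omega⟩
  have := Int.eq_zero_of_abs_lt_dvd hd (by rw [abs_lt]; omega)
  omega

lemma sum_ne {n : ℕ} (w : ℤ → ℤ) (k : ℤ) (p0 : ℤ × ℤ)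
    (hp0 : p0 ∈ ((Finset.Icc (1 : ℤ) (n : ℤ)) ×ˢ (Finset.Icc (1 : ℤ) (n : ℤ))).filter
      (fun p => p.1 < p.2))
    (hother : ∀ p ∈ ((Finset.Icc (1 : ℤ) (n : ℤ)) ×ˢ (Finset.Icc (1 : ℤ) (n : ℤ))).filter
      (fun p => p.1 < p.2), p ≠ p0 →
      (Int.fdiv (sRef n k (w p.2) - sRef n k (w p.1)) (n:ℤ)).natAbs
        = (Int.fdiv (w p.2 - w p.1) (n:ℤ)).natAbs)
    (hdrop : (Int.fdiv (w p0.2 - w p0.1) (n:ℤ)).natAbs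
        = (Int.fdiv (sRef n k (w p0.2) - sRef n k (w p0.1)) (n:ℤ)).natAbs + 1) :
    affLen n (fun j => sRef n k (w j)) ≠ affLen n w + 1 := by
  set S := ((Finset.Icc (1 : ℤ) (n : ℤ)) ×ˢ (Finset.Icc (1 : ℤ) (n : ℤ))).filter
      (fun p => p.1 < p.2) with hS
  set F : ℤ × ℤ → ℕ := fun p => (Int.fdiv (w p.2 - w p.1) (n:ℤ)).natAbs with hF
  set G : ℤ × ℤ → ℕ :=
    fun p => (Int.fdiv (sRef n k (w p.2) - sRef n k (w p.1)) (n:ℤ)).natAbs with hG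
  have h1 : affLen n (fun j => sRef n k (w j)) = ∑ p ∈ S, G p := by
    simp only [affLen, hS, hG]
  have h2 : affLen n w = ∑ p ∈ S, F p := by
    simp only [affLen, hS, hF]
  have h3 : ∑ p ∈ S.erase p0, G p = ∑ p ∈ S.erase p0, F p :=
    Finset.sum_congr rfl (fun p hp => hother p (Finset.mem_of_mem_erase hp)
      (Finset.ne_of_mem_erase hp))
  have h4 : G p0 + ∑ p ∈ S.erase p0, G p = ∑ p ∈ S, G p := Finset.add_sum_erase S G hp0
  have h5 : F p0 + ∑ p ∈ S.erase p0, F p = ∑ p ∈ S, F p := Finset.add_sum_erase S F hp0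
  have hd : F p0 = G p0 + 1 := hdrop
  omega


/-- Lemma 2.5.1: if left multiplication by `s_k` increases the length of `w`,
then it preserves every inversion of `w`. -/
theorem stmt9 (n : ℕ) (hn : 2 ≤ n) (w : ℤ → ℤ) (hw : IsAff n w) (a b k : ℤ)
    (hab : a < b) (hwab : w b < w a)
    (hlen : affLen n (fun j => sRef n k (w j)) = affLen n w + 1) :
    sRef n k (w b) < sRef n k (w a) := by
  have hN : (2:ℤ) ≤ (n:ℤ) := by exact_mod_cast hn
  have hN0 : (0:ℤ) < (n:ℤ) := by omega
  set x := w b with hx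
  set y := w a with hy
  by_cases hbad : x % (n:ℤ) = k % (n:ℤ) ∧ y = x + 1
  -- the bad case: derive a contradiction with hlen
  · exfalso
    obtain ⟨hbx, hby⟩ := hbad
    set t := (b-1) / (n:ℤ) with ht
    set s := (a-1) / (n:ℤ) with hs
    set i0 := b - (n:ℤ)*t with hi0
    set j0 := a - (n:ℤ)*s with hj0
    have hbt := Int.mul_ediv_add_emod (b-1) (n:ℤ)
    rw [← ht] at hbt
    have hbt0 := Int.emod_nonneg (b-1) (by omega : (n:ℤ) ≠ 0)
    have hbt1 := Int.emod_lt_of_pos (b-1) hN0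
    have hi0b : 1 ≤ i0 ∧ i0 ≤ (n:ℤ) := by constructor <;> omega
    have has := Int.mul_ediv_add_emod (a-1) (n:ℤ)
    rw [← hs] at has
    have has0 := Int.emod_nonneg (a-1) (by omega : (n:ℤ) ≠ 0)
    have has1 := Int.emod_lt_of_pos (a-1) hN0
    have hj0b : 1 ≤ j0 ∧ j0 ≤ (n:ℤ) := by constructor <;> omega
    have hwb : w b = w i0 + (n:ℤ)*t := by
      rw [show w b = w (i0 + (n:ℤ)*t) by congr 1; omega, aff_per hw]
    have hwa : w a = w j0 + (n:ℤ)*s := by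
      rw [show w a = w (j0 + (n:ℤ)*s) by congr 1; omega, aff_per hw]
    have wi0mod : w i0 % (n:ℤ) = k % (n:ℤ) := by
      rw [show k % (n:ℤ) = x % (n:ℤ) from hbx.symm]
      exact emod_eq_iff_dvd.mpr ⟨-t, by rw [mul_neg]; omega⟩
    have wj0mod : w j0 % (n:ℤ) = (k+1) % (n:ℤ) := by
      have h1 : y % (n:ℤ) = (k+1) % (n:ℤ) := by rw [hby]; exact emod_succ_eq hbx
      rw [show (k+1) % (n:ℤ) = y % (n:ℤ) from h1.symm]
      exact emod_eq_iff_dvd.mpr ⟨-s, by rw [mul_neg]; omega⟩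
    have hne : i0 ≠ j0 := by
      intro h
      apply k_ne_k1 hN
      rw [← wi0mod, h, wj0mod]
    -- uniqueness of representatives
    have huniqk : ∀ p : ℤ, 1 ≤ p → p ≤ (n:ℤ) → w p % (n:ℤ) = k % (n:ℤ) → p = i0 :=
      fun p h1 h2 h3 => aff_uniq hw h1 h2 hi0b.1 hi0b.2 (by rw [h3, wi0mod])
    have huniqk1 : ∀ p : ℤ, 1 ≤ p → p ≤ (n:ℤ) → w p % (n:ℤ) = (k+1) % (n:ℤ) → p = j0 :=
      fun p h1 h2 h3 => aff_uniq hw h1 h2 hj0b.1 hj0b.2 (by rw [h3, wj0mod])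
    -- the value gap
    have hval : w j0 - w i0 = 1 + (n:ℤ)*(t - s) := by
      rw [mul_sub]; omega
    rcases lt_or_gt_of_ne hne with hij | hij
    · -- p0 = (i0, j0)
      have hm1 : 1 ≤ t - s := by
        have hab2 : j0 + (n:ℤ)*s < i0 + (n:ℤ)*t := by omega
        by_contra hc
        push_neg at hc
        have : (n:ℤ)*(t-s) ≤ 0 :=
          mul_nonpos_of_nonneg_of_nonpos (by omega) (by omega)
        rw [mul_sub] at this
        omega
      refine sum_ne w k (i0, j0) ?_ ?_ ?_ hlen
      · simp only [Finset.mem_filter, Finset.mem_product, Finset.mem_Icc]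
        exact ⟨⟨⟨hi0b.1, hi0b.2⟩, ⟨hj0b.1, hj0b.2⟩⟩, hij⟩
      · rintro ⟨p1, p2⟩ hp hne2
        simp only [Finset.mem_filter, Finset.mem_product, Finset.mem_Icc] at hp
        refine congrArg Int.natAbs (fdiv_sRef_sub hn ?_ ?_)
        · rintro ⟨hc1, hc2⟩
          exact hne2 (by
            rw [huniqk p1 hp.1.1.1 hp.1.1.2 hc1, huniqk1 p2 hp.1.2.1 hp.1.2.2 hc2])
        · rintro ⟨hc1, hc2⟩
          have e1 := huniqk1 p1 hp.1.1.1 hp.1.1.2 hc1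
          have e2 := huniqk p2 hp.1.2.1 hp.1.2.2 hc2
          have := hp.2
          omega
      · simp only
        have hF : Int.fdiv (w j0 - w i0) (n:ℤ) = t - s := by
          rw [hval, Int.fdiv_eq_ediv_of_nonneg _ (by omega),
            show 1 + (n:ℤ)*(t-s) = (n:ℤ)*(t-s) + 1 by ring,
            ediv_eq_of (by omega) (by omega)]
        have hG : Int.fdiv (sRef n k (w j0) - sRef n k (w i0)) (n:ℤ) = t - s - 1 := by
          rw [sRef_of_k1 hn wj0mod, sRef_of_k wi0mod,
            show w j0 - 1 - (w i0 + 1) = (w j0 - w i0) - 2 by ring, hval,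
            Int.fdiv_eq_ediv_of_nonneg _ (by omega),
            show 1 + (n:ℤ)*(t-s) - 2 = (n:ℤ)*(t - s - 1) + ((n:ℤ) - 1) by ring,
            ediv_eq_of (by omega) (by omega)]
        rw [hF, hG]
        omega
    · -- p0 = (j0, i0)
      have hm1 : s - t ≤ 0 := by
        have hab2 : j0 + (n:ℤ)*s < i0 + (n:ℤ)*t := by omega
        by_contra hc
        push_neg at hc
        have : (n:ℤ) ≤ (n:ℤ)*(s-t) := le_mul_of_one_le_right (by omega) (by omega)
        rw [mul_sub] at this
        omega
      have hval2 : w i0 - w j0 = (n:ℤ)*(s - t) - 1 := by rw [mul_sub]; omega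
      refine sum_ne w k (j0, i0) ?_ ?_ ?_ hlen
      · simp only [Finset.mem_filter, Finset.mem_product, Finset.mem_Icc]
        exact ⟨⟨⟨hj0b.1, hj0b.2⟩, ⟨hi0b.1, hi0b.2⟩⟩, hij⟩
      · rintro ⟨p1, p2⟩ hp hne2
        simp only [Finset.mem_filter, Finset.mem_product, Finset.mem_Icc] at hp
        refine congrArg Int.natAbs (fdiv_sRef_sub hn ?_ ?_)
        · rintro ⟨hc1, hc2⟩
          have e1 := huniqk p1 hp.1.1.1 hp.1.1.2 hc1
          have e2 := huniqk1 p2 hp.1.2.1 hp.1.2.2 hc2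
          have := hp.2
          omega
        · rintro ⟨hc1, hc2⟩
          exact hne2 (by
            rw [huniqk1 p1 hp.1.1.1 hp.1.1.2 hc1, huniqk p2 hp.1.2.1 hp.1.2.2 hc2])
      · simp only
        have hF : Int.fdiv (w i0 - w j0) (n:ℤ) = s - t - 1 := by
          rw [hval2, Int.fdiv_eq_ediv_of_nonneg _ (by omega),
            show (n:ℤ)*(s-t) - 1 = (n:ℤ)*(s - t - 1) + ((n:ℤ) - 1) by ring,
            ediv_eq_of (by omega) (by omega)]
        have hG : Int.fdiv (sRef n k (w i0) - sRef n k (w j0)) (n:ℤ) = s - t := by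
          rw [sRef_of_k wi0mod, sRef_of_k1 hn wj0mod,
            show w i0 + 1 - (w j0 - 1) = (w i0 - w j0) + 2 by ring, hval2,
            show (n:ℤ)*(s-t) - 1 + 2 = (n:ℤ)*(s-t) + 1 by ring,
            Int.fdiv_eq_ediv_of_nonneg _ (by omega),
            ediv_eq_of (by omega) (by omega)]
        rw [hF, hG]
        omega
  -- the good case: direct verification
  · by_cases hx1 : x % (n:ℤ) = k % (n:ℤ)
    · rw [sRef_of_k hx1]
      by_cases hy1 : y % (n:ℤ) = k % (n:ℤ)
      · rw [sRef_of_k hy1]; omega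
      · by_cases hy2 : y % (n:ℤ) = (k+1) % (n:ℤ)
        · rw [sRef_of_k1 hn hy2]
          have h1 : y ≠ x + 1 := fun h => hbad ⟨hx1, h⟩
          have h2 : y ≠ x + 2 := by
            intro h
            have h3 : (x+2) % (n:ℤ) = (k+2) % (n:ℤ) := by
              have := emod_succ_eq (emod_succ_eq hx1)
              simpa [show k + 1 + 1 = k + 2 by ring, show x + 1 + 1 = x + 2 by ring]
                using this
            rw [h] at hy2
            exact k_ne_k1 (k := k+1) hN (by
              rw [← hy2, h3, show k + 1 + 1 = k + 2 by ring])
          omega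
        · rw [sRef_other hy1 hy2]
          have h1 : y ≠ x + 1 := by
            intro h
            exact hy2 (by rw [h]; exact emod_succ_eq hx1)
          omega
    · by_cases hx2 : x % (n:ℤ) = (k+1) % (n:ℤ)
      · rw [sRef_of_k1 hn hx2]
        by_cases hy1 : y % (n:ℤ) = k % (n:ℤ)
        · rw [sRef_of_k hy1]; omega
        · by_cases hy2 : y % (n:ℤ) = (k+1) % (n:ℤ)
          · rw [sRef_of_k1 hn hy2]; omega
          · rw [sRef_other hy1 hy2]; omega
      · rw [sRef_other hx1 hx2]
        by_cases hy1 : y % (n:ℤ) = k % (n:ℤ)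
        · rw [sRef_of_k hy1]; omega
        · by_cases hy2 : y % (n:ℤ) = (k+1) % (n:ℤ)
          · rw [sRef_of_k1 hn hy2]
            have h1 : y ≠ x + 1 := by
              intro h
              apply hx1
              have := emod_pred_eq hy2
              simpa [h, show k + 1 - 1 = k by ring] using this
            omega
          · rw [sRef_other hy1 hy2]; omega
end

section
/- Let w ∈ W̃_n and let i < j be integers with i ≢ j (mod n) and w(i) > w(j) (so (i, j) is a d-chain of w of length 2). Then for all integers a, b, the two integers i + an and j + bn never lie in a common d-antichain of w; explicitly, if x < y are the elements of {i + an, j + bn} arranged in increasing order, then it is not the case that both y − n < x and w(y) − n < w(x) < w(y). -/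
lemma aff_shift (n : ℕ) (w : ℤ → ℤ) (hw : ∀ i : ℤ, w (i + (n : ℤ)) = w i + (n : ℤ)) :
    ∀ (k x : ℤ), w (x + k * n) = w x + k * n := by
  intro k
  induction k using Int.induction_on with
  | zero => simp
  | succ k ih =>
    intro x
    have h1 : x + ((k : ℤ) + 1) * n = (x + k * n) + n := by ring
    rw [h1, hw, ih]; ring
  | pred k ih =>
    intro x
    have h1 : x + (-(k : ℤ) - 1) * n + n = x + (-(k : ℤ)) * n := by ring
    have h2 := hw (x + (-(k : ℤ) - 1) * n)
    rw [h1, ih] at h2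
    linarith

/-- Half of Lemma 2.4.1: if `(i, j)` is a d-chain of `w` of length 2, then for
all `a, b` the integers `i + an` and `j + bn` never lie in a common d-antichain
of `w`. -/
theorem stmt10 (n : ℕ) (hn : 2 ≤ n) (w : ℤ → ℤ) (hw : IsAff n w) (i j : ℤ)
    (hij : i < j) (hmod : ¬ Int.ModEq (n : ℤ) i j) (hchain : w j < w i) (a b : ℤ) :
    ¬ (max (i + a * n) (j + b * n) - n < min (i + a * n) (j + b * n) ∧
       w (max (i + a * n) (j + b * n)) - n < w (min (i + a * n) (j + b * n)) ∧
       w (min (i + a * n) (j + b * n)) < w (max (i + a * n) (j + b * n))) := by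
  rintro ⟨h1, h2, h3⟩
  have hk := aff_shift n w hw.2
  have hn' : (2 : ℤ) ≤ (n : ℤ) := by exact_mod_cast hn
  have hne : i + a * n ≠ j + b * n := by
    intro he
    apply hmod
    have : (n : ℤ) ∣ j - i := ⟨a - b, by linarith [he]; ⟩
    exact (Int.modEq_iff_dvd.mpr (by rcases this with ⟨c, hc⟩; exact ⟨c, hc⟩))
  rcases lt_or_gt_of_ne hne with h | h
  · rw [max_eq_right h.le, min_eq_left h.le] at h1 h2 h3
    rw [hk, hk] at h2 h3
    -- h1 : j + b*n - n < i + a*n ; h2 : w j + b*n - n < w i + a*n ; h3 : w i + a*n < w j + b*n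
    have hba : b - a ≤ 0 := by
      by_contra hc
      push_neg at hc
      have : 1 * (n : ℤ) ≤ (b - a) * n := by
        apply mul_le_mul_of_nonneg_right (by omega) (by positivity)
      nlinarith
    have : (b - a) * n ≤ 0 := mul_nonpos_of_nonpos_of_nonneg (by omega) (by positivity)
    nlinarith
  · rw [max_eq_left h.le, min_eq_right h.le] at h1 h2 h3
    rw [hk, hk] at h2 h3
    -- h : j + b*n < i + a*n ; h1 : i + a*n - n < j + b*n ; h2 : w i + a*n - n < w j + b*n
    have hab : a - b ≤ 0 := by
      by_contra hc
      push_neg at hc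
      have : 1 * (n : ℤ) ≤ (a - b) * n := by
        apply mul_le_mul_of_nonneg_right (by omega) (by positivity)
      nlinarith
    have : (a - b) * n ≤ 0 := mul_nonpos_of_nonpos_of_nonneg (by omega) (by positivity)
    nlinarith
end

section
/- For v = (v_1, …, v_n) ∈ ℤ^n define the translation t_v ∈ W̃_n by t_v(j) = j + v_r · n, where r ∈ {1, …, n} is determined by j ≡ r (mod n). Then: (i) L(t_v) = Σ_{1 ≤ i < j ≤ n} |v_j − v_i|; and (ii) if both v and u are weakly decreasing (v_1 ≥ v_2 ≥ … ≥ v_n and u_1 ≥ … ≥ u_n), then L(t_{v+u}) = L(t_v) + L(t_u). -/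
/-- The translation `t_v(j) = j + v_r · n` where `1 ≤ r ≤ n` and `j ≡ r (mod n)`,
so `r = (j - 1) % n + 1`. -/
def transl (n : ℕ) (v : ℤ → ℤ) : ℤ → ℤ :=
  fun j => j + v ((j - 1) % (n : ℤ) + 1) * n

lemma transl_eq (n : ℕ) (v : ℤ → ℤ) {j : ℤ} (h1 : 1 ≤ j) (h2 : j ≤ (n : ℤ)) :
    transl n v j = j + v j * n := by
  have : (j - 1) % (n : ℤ) = j - 1 := Int.emod_eq_of_lt (by omega) (by omega)
  simp [transl, this]

lemma key (n : ℕ) (hn : 2 ≤ n) (v : ℤ → ℤ) {i j : ℤ} (h1 : 1 ≤ i) (hij : i < j)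
    (hjn : j ≤ (n : ℤ)) :
    Int.fdiv (transl n v j - transl n v i) (n : ℤ) = v j - v i := by
  have hn0 : (0 : ℤ) < n := by exact_mod_cast Nat.lt_of_lt_of_le Nat.zero_lt_two hn
  rw [transl_eq n v (by omega) hjn, transl_eq n v h1 (by omega)]
  have : j + v j * n - (i + v i * n) = (j - i) + (v j - v i) * n := by ring
  rw [this, Int.fdiv_eq_ediv_of_nonneg _ (le_of_lt hn0),
    Int.add_mul_ediv_right _ _ (ne_of_gt hn0),
    Int.ediv_eq_zero_of_lt (by omega) (by omega), zero_add]

theorem stmt15 (n : ℕ) (hn : 2 ≤ n) :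
    (∀ v : ℤ → ℤ,
      affLen n (transl n v) =
        ∑ p ∈ ((Finset.Icc (1 : ℤ) (n : ℤ)) ×ˢ (Finset.Icc (1 : ℤ) (n : ℤ))).filter
            (fun p => p.1 < p.2),
          (v p.2 - v p.1).natAbs) ∧
    (∀ v u : ℤ → ℤ,
      (∀ i j : ℤ, 1 ≤ i → i ≤ j → j ≤ (n : ℤ) → v j ≤ v i) →
      (∀ i j : ℤ, 1 ≤ i → i ≤ j → j ≤ (n : ℤ) → u j ≤ u i) →
      affLen n (transl n (fun j => v j + u j)) =
        affLen n (transl n v) + affLen n (transl n u)) := by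
  have part1 : ∀ v : ℤ → ℤ,
      affLen n (transl n v) =
        ∑ p ∈ ((Finset.Icc (1 : ℤ) (n : ℤ)) ×ˢ (Finset.Icc (1 : ℤ) (n : ℤ))).filter
            (fun p => p.1 < p.2),
          (v p.2 - v p.1).natAbs := by
    intro v
    refine Finset.sum_congr rfl fun p hp => ?_
    simp only [Finset.mem_filter, Finset.mem_product, Finset.mem_Icc] at hp
    rw [key n hn v hp.1.1.1 hp.2 hp.1.2.2]
  refine ⟨part1, fun v u hv hu => ?_⟩
  rw [part1, part1, part1, ← Finset.sum_add_distrib]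
  refine Finset.sum_congr rfl fun p hp => ?_
  simp only [Finset.mem_filter, Finset.mem_product, Finset.mem_Icc] at hp
  have h1 : v p.2 - v p.1 ≤ 0 := by
    have := hv p.1 p.2 hp.1.1.1 (le_of_lt hp.2) hp.1.2.2; omega
  have h2 : u p.2 - u p.1 ≤ 0 := by
    have := hu p.1 p.2 hp.1.1.1 (le_of_lt hp.2) hp.1.2.2; omega
  have : v p.2 + u p.2 - (v p.1 + u p.1) = (v p.2 - v p.1) + (u p.2 - u p.1) := by ring
  rw [this, Int.natAbs_add_of_nonpos h1 h2]
end
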